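/- There exists a constant K > 0 with the following property. Call a tour a finite list of points p₀, p₁, …, p_m in ℝ² with p_m = p₀; its length is Σ_{i<m} ‖p_{i+1} − p_i‖, its trace is the union of the closed segments [p_i, p_{i+1}] (the singleton {p₀} if m = 0), and its coverage is the Minkowski sum of its trace with the closed unit disk centered at the origin. Let Λ = p₀ + {i·(√3, 0) + j·(√3/2, 3/2) : i, j ∈ ℤ} be the triangular lattice of centers of a tiling of the plane by regular hexagons of diameter 2, shifted so that p₀ is a center. Then for every tour p of length at least 1 there exists a tour q whose first point is p₀, all of whose points lie in Λ, whose coverage contains the coverage of p, and whose length is at most K times the length of p. -/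

import Mathlib

open Pointwise

/-- The length of a tour `p 0, p 1, …, p m`. -/
noncomputable def tourLength (m : ℕ) (p : ℕ → EuclideanSpace ℝ (Fin 2)) : ℝ :=
  ∑ i ∈ Finset.range m, ‖p (i + 1) - p i‖

/-- The trace of a tour: the union of the closed segments joining consecutive
points (the singleton `{p 0}` if `m = 0`). -/
def tourTrace (m : ℕ) (p : ℕ → EuclideanSpace ℝ (Fin 2)) :
    Set (EuclideanSpace ℝ (Fin 2)) :=
  {p 0} ∪ ⋃ i ∈ Finset.range m, segment ℝ (p i) (p (i + 1))

/-- The coverage of a tour: the Minkowski sum of its trace with the closed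
unit disk centered at the origin. -/
noncomputable def diskCoverage (m : ℕ) (p : ℕ → EuclideanSpace ℝ (Fin 2)) :
    Set (EuclideanSpace ℝ (Fin 2)) :=
  tourTrace m p + Metric.closedBall (0 : EuclideanSpace ℝ (Fin 2)) 1

/-- The first basis vector `(√3, 0)` of the triangular lattice of centers of a
tiling of the plane by regular hexagons of diameter `2`. -/
noncomputable def hexBasis₁ : EuclideanSpace ℝ (Fin 2) :=
  (WithLp.equiv 2 (Fin 2 → ℝ)).symm ![Real.sqrt 3, 0]

/-- The second basis vector `(√3/2, 3/2)` of the triangular lattice of centers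
of a tiling of the plane by regular hexagons of diameter `2`. -/
noncomputable def hexBasis₂ : EuclideanSpace ℝ (Fin 2) :=
  (WithLp.equiv 2 (Fin 2 → ℝ)).symm ![Real.sqrt 3 / 2, 3 / 2]

/-! ### Auxiliary material -/

open scoped Classical

local notation "E2" => EuclideanSpace ℝ (Fin 2)

namespace GridAux

lemma hexBasis₁_apply0 : hexBasis₁ 0 = Real.sqrt 3 := by
  simp [hexBasis₁, WithLp.equiv_symm_apply, PiLp.toLp_apply]
lemma hexBasis₁_apply1 : hexBasis₁ 1 = 0 := by
  simp [hexBasis₁, WithLp.equiv_symm_apply, PiLp.toLp_apply]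
lemma hexBasis₂_apply0 : hexBasis₂ 0 = Real.sqrt 3 / 2 := by
  simp [hexBasis₂, WithLp.equiv_symm_apply, PiLp.toLp_apply]
lemma hexBasis₂_apply1 : hexBasis₂ 1 = 3 / 2 := by
  simp [hexBasis₂, WithLp.equiv_symm_apply, PiLp.toLp_apply]

noncomputable def lOff (ij : ℤ × ℤ) : E2 :=
  (ij.1 : ℝ) • hexBasis₁ + (ij.2 : ℝ) • hexBasis₂

lemma lOff_apply0 (ij : ℤ × ℤ) :
    lOff ij 0 = (ij.1 : ℝ) * Real.sqrt 3 + (ij.2 : ℝ) * (Real.sqrt 3 / 2) := by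
  simp [lOff, PiLp.add_apply, PiLp.smul_apply, hexBasis₁_apply0, hexBasis₂_apply0,
    smul_eq_mul]

lemma lOff_apply1 (ij : ℤ × ℤ) : lOff ij 1 = (ij.2 : ℝ) * (3 / 2) := by
  simp [lOff, PiLp.add_apply, PiLp.smul_apply, hexBasis₁_apply1, hexBasis₂_apply1,
    smul_eq_mul]

lemma lOff_add (a b : ℤ × ℤ) : lOff (a + b) = lOff a + lOff b := by
  simp only [lOff, Prod.fst_add, Prod.snd_add, Int.cast_add, add_smul]
  abel

lemma lOff_zero : lOff (0, 0) = 0 := by simp [lOff]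

lemma norm_le_of_coords (w : E2) (r : ℝ) (hr : 0 ≤ r)
    (h : (w 0) ^ 2 + (w 1) ^ 2 ≤ r ^ 2) : ‖w‖ ≤ r := by
  rw [EuclideanSpace.norm_eq]
  have h2 : ∑ i : Fin 2, ‖w i‖ ^ 2 = (w 0) ^ 2 + (w 1) ^ 2 := by
    simp [Fin.sum_univ_two, Real.norm_eq_abs, sq_abs]
  rw [h2]
  calc Real.sqrt ((w 0) ^ 2 + (w 1) ^ 2) ≤ Real.sqrt (r ^ 2) := Real.sqrt_le_sqrt h
    _ = r := Real.sqrt_sq hr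

lemma abs_coord_le_norm (w : E2) (i : Fin 2) : |w i| ≤ ‖w‖ := by
  rw [EuclideanSpace.norm_eq, show |w i| = Real.sqrt ((w i) ^ 2) by
    rw [Real.sqrt_sq_eq_abs]]
  apply Real.sqrt_le_sqrt
  fin_cases i <;>
    simp [Fin.sum_univ_two, Real.norm_eq_abs, sq_abs] <;> positivity

lemma tri_min (s3 a w : ℝ) (h3 : s3 ^ 2 = 3) (hp : 0 < s3) (ha0 : 0 ≤ a)
    (ha : a ≤ s3 / 2) (hw0 : 0 ≤ w) (hw : w ≤ 3 / 2) :
    a ^ 2 + w ^ 2 ≤ 1 ∨ (s3 / 2 - a) ^ 2 + (3 / 2 - w) ^ 2 ≤ 1 := by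
  have hfact : 0 ≤ (s3 / 2 - a) * (s3 / 2 + a) :=
    mul_nonneg (by linarith) (by linarith)
  rcases le_or_gt w (1 / 2) with hw1 | hw1
  · left; nlinarith
  · rcases le_or_gt 1 w with hw2 | hw2
    · right; nlinarith [sq_nonneg (s3 / 2 - a)]
    · by_contra hcon
      push_neg at hcon
      obtain ⟨h1, h2⟩ := hcon
      nlinarith [mul_nonneg ha0 (by linarith : (0:ℝ) ≤ s3 - 2 * a),
        mul_pos (by linarith : (0:ℝ) < 1 - w) (by linarith : (0:ℝ) < 2 * w - 1)]

lemma key_real (s3 u v : ℝ) (h3 : s3 ^ 2 = 3) (hp : 0 < s3) :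
    ∃ i j : ℤ, (u - ((i : ℝ) * s3 + (j : ℝ) * (s3 / 2))) ^ 2 +
      (v - (j : ℝ) * (3 / 2)) ^ 2 ≤ 1 := by
  obtain ⟨j₀, hj1, hj2⟩ : ∃ j₀ : ℤ, (j₀ : ℝ) ≤ 2 * v / 3 ∧ 2 * v / 3 < j₀ + 1 :=
    ⟨⌊2 * v / 3⌋, Int.floor_le _, Int.lt_floor_add_one _⟩
  have hw0 : 0 ≤ v - (j₀ : ℝ) * (3 / 2) := by linarith
  have hw1 : v - (j₀ : ℝ) * (3 / 2) ≤ 3 / 2 := by linarith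
  obtain ⟨i₀, hi1, hi2⟩ : ∃ i₀ : ℤ,
      (i₀ : ℝ) ≤ (u - (j₀ : ℝ) * (s3 / 2)) / s3 + 1 / 2 ∧
      (u - (j₀ : ℝ) * (s3 / 2)) / s3 + 1 / 2 < i₀ + 1 :=
    ⟨⌊_⌋, Int.floor_le _, Int.lt_floor_add_one _⟩
  have hs1 : (i₀ : ℝ) * s3 ≤ (u - (j₀ : ℝ) * (s3 / 2)) + s3 / 2 := by
    have := (mul_le_mul_of_nonneg_right hi1 hp.le)
    rw [div_add' _ _ _ hp.ne', div_mul_cancel₀] at this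
    · linarith
    · exact hp.ne'
  have hs2 : (u - (j₀ : ℝ) * (s3 / 2)) - s3 / 2 < (i₀ : ℝ) * s3 := by
    have := (mul_lt_mul_of_pos_right hi2 hp)
    rw [div_add' _ _ _ hp.ne', div_mul_cancel₀] at this
    · linarith
    · exact hp.ne'
  set δ : ℝ := u - (j₀ : ℝ) * (s3 / 2) - (i₀ : ℝ) * s3 with hδdef
  have hδub : δ ≤ s3 / 2 := by rw [hδdef]; linarith
  have hδlb : -(s3 / 2) ≤ δ := by rw [hδdef]; linarith
  have habs : |δ| ≤ s3 / 2 := abs_le.2 ⟨hδlb, hδub⟩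
  rcases tri_min s3 |δ| (v - (j₀ : ℝ) * (3 / 2)) h3 hp (abs_nonneg δ) habs hw0 hw1
    with hk | hk
  · refine ⟨i₀, j₀, ?_⟩
    have e1 : u - ((i₀ : ℝ) * s3 + (j₀ : ℝ) * (s3 / 2)) = δ := by rw [hδdef]; ring
    rw [e1, ← sq_abs δ] at *
    linarith
  · refine ⟨if 0 ≤ δ then i₀ else i₀ - 1, j₀ + 1, ?_⟩
    have e2 : (v - ((j₀ + 1 : ℤ) : ℝ) * (3 / 2)) ^ 2 =
        (3 / 2 - (v - (j₀ : ℝ) * (3 / 2))) ^ 2 := by push_cast; ring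
    rw [e2]
    have e1 : (u - ((((if 0 ≤ δ then i₀ else i₀ - 1) : ℤ) : ℝ) * s3 +
        ((j₀ + 1 : ℤ) : ℝ) * (s3 / 2))) ^ 2 = (s3 / 2 - |δ|) ^ 2 := by
      by_cases hd : 0 ≤ δ
      · rw [if_pos hd, abs_of_nonneg hd]
        push_cast
        rw [show u - ((i₀ : ℝ) * s3 + ((j₀ : ℝ) + 1) * (s3 / 2)) = -(s3 / 2 - δ) by
          rw [hδdef]; ring]
        ring
      · rw [if_neg hd, abs_of_neg (not_le.1 hd)]
        push_cast
        rw [show u - (((i₀ : ℝ) - 1) * s3 + ((j₀ : ℝ) + 1) * (s3 / 2)) = s3 / 2 - -δ by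
          rw [hδdef]; ring]
    rw [e1]
    linarith

/-- Covering lemma: every point is within distance 1 of a lattice point. -/
lemma exists_lattice_near (p0 x : E2) :
    ∃ ij : ℤ × ℤ, ‖x - (p0 + lOff ij)‖ ≤ 1 := by
  have h3 : Real.sqrt 3 ^ 2 = 3 := Real.sq_sqrt (by norm_num)
  have hp : (0:ℝ) < Real.sqrt 3 := Real.sqrt_pos.2 (by norm_num)
  obtain ⟨i, j, hij⟩ := key_real (Real.sqrt 3) (x 0 - p0 0) (x 1 - p0 1) h3 hp
  refine ⟨(i, j), norm_le_of_coords _ 1 one_pos.le ?_⟩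
  have c0 : (x - (p0 + lOff (i, j))) 0 =
      (x 0 - p0 0) - ((i : ℝ) * Real.sqrt 3 + (j : ℝ) * (Real.sqrt 3 / 2)) := by
    simp only [PiLp.sub_apply, PiLp.add_apply, lOff_apply0]; ring
  have c1 : (x - (p0 + lOff (i, j))) 1 =
      (x 1 - p0 1) - (j : ℝ) * (3 / 2) := by
    simp only [PiLp.sub_apply, PiLp.add_apply, lOff_apply1]; ring
  rw [c0, c1]
  simpa using hij

lemma sqrt3_lt : Real.sqrt 3 ≤ 9 / 5 := by
  nlinarith [Real.sq_sqrt (show (0:ℝ) ≤ 3 by norm_num), Real.sqrt_nonneg 3]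

lemma sqrt3_gt : (17/10 : ℝ) < Real.sqrt 3 := by
  nlinarith [Real.sq_sqrt (show (0:ℝ) ≤ 3 by norm_num), Real.sqrt_nonneg 3]

lemma norm_hexBasis₁_le : ‖hexBasis₁‖ ≤ 9 / 5 := by
  refine norm_le_of_coords _ _ (by norm_num) ?_
  rw [hexBasis₁_apply0, hexBasis₁_apply1, Real.sq_sqrt (by norm_num : (0:ℝ) ≤ 3)]
  norm_num

lemma norm_hexBasis₂_le : ‖hexBasis₂‖ ≤ 9 / 5 := by
  refine norm_le_of_coords _ _ (by norm_num) ?_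
  rw [hexBasis₂_apply0, hexBasis₂_apply1]
  have h3 : Real.sqrt 3 ^ 2 = 3 := Real.sq_sqrt (by norm_num)
  nlinarith [h3]

lemma lOff_norm_le (ij : ℤ × ℤ) :
    ‖lOff ij‖ ≤ ((|ij.1| + |ij.2| : ℤ) : ℝ) * (9 / 5) := by
  calc ‖lOff ij‖ ≤ ‖(ij.1 : ℝ) • hexBasis₁‖ + ‖(ij.2 : ℝ) • hexBasis₂‖ :=
        norm_add_le _ _
    _ = |(ij.1 : ℝ)| * ‖hexBasis₁‖ + |(ij.2 : ℝ)| * ‖hexBasis₂‖ := by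
        rw [norm_smul, norm_smul, Real.norm_eq_abs, Real.norm_eq_abs]
    _ ≤ |(ij.1 : ℝ)| * (9 / 5) + |(ij.2 : ℝ)| * (9 / 5) := by
        gcongr
        · exact norm_hexBasis₁_le
        · exact norm_hexBasis₂_le
    _ = ((|ij.1| + |ij.2| : ℤ) : ℝ) * (9 / 5) := by
        push_cast [abs]
        ring

/-- enumeration of the `7 × 5` grid of offsets. -/
def hexEnum (s : ℕ) : ℤ × ℤ := (((s % 7 : ℕ) : ℤ) - 3, ((s / 7 : ℕ) : ℤ) - 2)

lemma hexEnum_norm_le (s : ℕ) (hs : s ≤ 34) : ‖lOff (hexEnum s)‖ ≤ 9 := by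
  have h1 : |(hexEnum s).1| ≤ 3 := by
    simp only [hexEnum]
    rw [abs_le]
    omega
  have h2 : |(hexEnum s).2| ≤ 2 := by
    simp only [hexEnum]
    rw [abs_le]
    omega
  refine (lOff_norm_le _).trans ?_
  have : ((|(hexEnum s).1| + |(hexEnum s).2| : ℤ) : ℝ) ≤ 5 := by
    have : (|(hexEnum s).1| + |(hexEnum s).2| : ℤ) ≤ 5 := by omega
    exact_mod_cast this
  nlinarith

-- arclength machinery

noncomputable def cum (p : ℕ → E2) (i : ℕ) : ℝ :=
  ∑ j ∈ Finset.range i, ‖p (j + 1) - p j‖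

lemma cum_zero (p : ℕ → E2) : cum p 0 = 0 := by simp [cum]

lemma cum_succ (p : ℕ → E2) (i : ℕ) :
    cum p (i + 1) = cum p i + ‖p (i + 1) - p i‖ := by
  simp [cum, Finset.sum_range_succ]

lemma cum_mono (p : ℕ → E2) {i j : ℕ} (h : i ≤ j) : cum p i ≤ cum p j := by
  induction j with
  | zero => simp_all
  | succ n ih =>
    rcases Nat.lt_or_ge i (n + 1) with h' | h'
    · exact (ih (Nat.lt_succ_iff.1 h')).trans
        (by rw [cum_succ]; linarith [norm_nonneg (p (n + 1) - p n)])
    · have : i = n + 1 := le_antisymm h h'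
      simp [this]

lemma cum_nonneg (p : ℕ → E2) (i : ℕ) : 0 ≤ cum p i := by
  have := cum_mono p (Nat.zero_le i)
  rwa [cum_zero] at this

lemma chain (p : ℕ → E2) {i j : ℕ} (h : i ≤ j) :
    ‖p j - p i‖ ≤ cum p j - cum p i := by
  induction j with
  | zero =>
    have : i = 0 := Nat.le_zero.1 h
    simp [this]
  | succ n ih =>
    rcases Nat.lt_or_ge i (n + 1) with h' | h'
    · have hin : i ≤ n := Nat.lt_succ_iff.1 h'
      calc ‖p (n + 1) - p i‖ ≤ ‖p (n + 1) - p n‖ + ‖p n - p i‖ := by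
            simpa using norm_sub_le_norm_sub_add_norm_sub (p (n+1)) (p n) (p i)
        _ ≤ ‖p (n + 1) - p n‖ + (cum p n - cum p i) := by linarith [ih hin]
        _ = cum p (n + 1) - cum p i := by rw [cum_succ]; ring
    · have : i = n + 1 := le_antisymm h h'
      simp [this]

noncomputable def idx (m : ℕ) (p : ℕ → E2) (t : ℝ) : ℕ :=
  Nat.findGreatest (fun i => cum p i ≤ t) m

lemma idx_le (m : ℕ) (p : ℕ → E2) (t : ℝ) : idx m p t ≤ m :=
  Nat.findGreatest_le m

lemma cum_idx_le (m : ℕ) (p : ℕ → E2) {t : ℝ} (ht : 0 ≤ t) :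
    cum p (idx m p t) ≤ t :=
  Nat.findGreatest_spec (P := fun i => cum p i ≤ t) (Nat.zero_le m)
    (by show cum p 0 ≤ t; rw [cum_zero]; exact ht)

lemma le_idx (m : ℕ) (p : ℕ → E2) {t : ℝ} {i : ℕ} (hi : i ≤ m)
    (h : cum p i ≤ t) : i ≤ idx m p t :=
  Nat.le_findGreatest hi h

lemma idx_mono (m : ℕ) (p : ℕ → E2) {t t' : ℝ} (h : t ≤ t') :
    idx m p t ≤ idx m p t' :=
  Nat.findGreatest_mono (fun _ hn => hn.trans h) le_rfl

lemma le_cum_idx_succ (m : ℕ) (p : ℕ → E2) {t : ℝ}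
    (ht : t ≤ cum p m) : t ≤ cum p (idx m p t + 1) := by
  rcases Nat.lt_or_ge (idx m p t) m with h | h
  · have hng := Nat.findGreatest_is_greatest (P := fun i => cum p i ≤ t)
      (Nat.lt_succ_self (idx m p t)) (Nat.succ_le_of_lt h)
    exact (not_le.1 hng).le
  · have he : idx m p t = m := le_antisymm (idx_le m p t) h
    rw [he, cum_succ]
    linarith [norm_nonneg (p (m + 1) - p m)]

noncomputable def pointAt (m : ℕ) (p : ℕ → E2) (t : ℝ) : E2 :=
  p (idx m p t) + ((t - cum p (idx m p t)) / ‖p (idx m p t + 1) - p (idx m p t)‖) •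
    (p (idx m p t + 1) - p (idx m p t))

lemma aux_alg (a b : E2) (d : ℝ) :
    b - (a + d • (b - a)) = (1 - d) • (b - a) := by
  rw [sub_smul, one_smul]; abel

lemma pointAt_near_left (m : ℕ) (p : ℕ → E2) {t : ℝ} (ht : 0 ≤ t) :
    ‖pointAt m p t - p (idx m p t)‖ ≤ t - cum p (idx m p t) := by
  set i := idx m p t
  set w := p (i + 1) - p i with hw
  rw [pointAt, add_sub_cancel_left, norm_smul]
  rcases eq_or_ne ‖w‖ 0 with h0 | h0
  · rw [h0, mul_zero]
    linarith [cum_idx_le m p ht]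
  · rw [Real.norm_eq_abs, abs_div, abs_of_nonneg (by linarith [cum_idx_le m p ht]),
      abs_of_nonneg (norm_nonneg w), div_mul_cancel₀ _ h0]

lemma pointAt_near_right (m : ℕ) (p : ℕ → E2) {t : ℝ} (ht : 0 ≤ t)
    (ht' : t ≤ cum p m) :
    ‖p (idx m p t + 1) - pointAt m p t‖ ≤ cum p (idx m p t + 1) - t := by
  have hle : cum p (idx m p t) ≤ t := cum_idx_le m p ht
  have hge : t ≤ cum p (idx m p t + 1) := le_cum_idx_succ m p ht'
  have hcs : cum p (idx m p t + 1) = cum p (idx m p t) +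
      ‖p (idx m p t + 1) - p (idx m p t)‖ := cum_succ p _
  rw [pointAt, aux_alg, norm_smul, Real.norm_eq_abs]
  rcases eq_or_ne ‖p (idx m p t + 1) - p (idx m p t)‖ 0 with h0 | h0
  · rw [h0, mul_zero]; linarith
  · have hwpos : 0 < ‖p (idx m p t + 1) - p (idx m p t)‖ :=
      lt_of_le_of_ne (norm_nonneg _) (Ne.symm h0)
    have h1 : (t - cum p (idx m p t)) / ‖p (idx m p t + 1) - p (idx m p t)‖ ≤ 1 := by
      rw [div_le_one hwpos]; linarith
    have h0' : 0 ≤ (t - cum p (idx m p t)) / ‖p (idx m p t + 1) - p (idx m p t)‖ :=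
      div_nonneg (by linarith) (norm_nonneg _)
    rw [abs_of_nonneg (by linarith)]
    have : (1 - (t - cum p (idx m p t)) / ‖p (idx m p t + 1) - p (idx m p t)‖) *
        ‖p (idx m p t + 1) - p (idx m p t)‖ =
        ‖p (idx m p t + 1) - p (idx m p t)‖ - (t - cum p (idx m p t)) := by
      field_simp
    rw [this]; linarith

lemma pointAt_lipschitz (m : ℕ) (p : ℕ → E2) {t t' : ℝ} (ht : 0 ≤ t)
    (htt : t ≤ t') (ht' : t' ≤ cum p m) :
    ‖pointAt m p t' - pointAt m p t‖ ≤ t' - t := by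
  have ht0' : 0 ≤ t' := ht.trans htt
  have htm : t ≤ cum p m := htt.trans ht'
  rcases Nat.lt_or_ge (idx m p t) (idx m p t') with hlt | hge
  · have h1 : ‖pointAt m p t' - p (idx m p t')‖ ≤ t' - cum p (idx m p t') :=
      pointAt_near_left m p ht0'
    have h2 : ‖p (idx m p t + 1) - pointAt m p t‖ ≤ cum p (idx m p t + 1) - t :=
      pointAt_near_right m p ht htm
    have h3 : ‖p (idx m p t') - p (idx m p t + 1)‖ ≤
        cum p (idx m p t') - cum p (idx m p t + 1) := chain p hlt
    calc ‖pointAt m p t' - pointAt m p t‖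
        ≤ ‖pointAt m p t' - p (idx m p t')‖ + ‖p (idx m p t') - pointAt m p t‖ := by
          simpa using norm_sub_le_norm_sub_add_norm_sub _ (p (idx m p t')) _
      _ ≤ ‖pointAt m p t' - p (idx m p t')‖ + (‖p (idx m p t') - p (idx m p t + 1)‖ +
          ‖p (idx m p t + 1) - pointAt m p t‖) := by
          have := norm_sub_le_norm_sub_add_norm_sub (p (idx m p t'))
            (p (idx m p t + 1)) (pointAt m p t)
          linarith [this]
      _ ≤ t' - t := by linarith
  · have heq : idx m p t = idx m p t' := le_antisymm (idx_mono m p htt) hge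
    have : pointAt m p t' - pointAt m p t =
        ((t' - t) / ‖p (idx m p t + 1) - p (idx m p t)‖) •
          (p (idx m p t + 1) - p (idx m p t)) := by
      have halg : ∀ (a w : E2) (r s : ℝ), (a + r • w) - (a + s • w) = (r - s) • w := by
        intros a w r s; rw [sub_smul]; abel
      rw [pointAt, pointAt, ← heq, halg, div_sub_div_same]
      congr 2
      ring
    rw [this] at *
    rw [norm_smul, Real.norm_eq_abs, abs_div, abs_of_nonneg (by linarith),
      abs_of_nonneg (norm_nonneg _)]
    rcases eq_or_ne ‖p (idx m p t + 1) - p (idx m p t)‖ 0 with h0 | h0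
    · rw [h0, div_zero, zero_mul]; linarith
    · rw [div_mul_cancel₀ _ h0]

lemma pointAt_cum (m : ℕ) (p : ℕ → E2) {i : ℕ} (hi : i ≤ m) :
    pointAt m p (cum p i) = p i := by
  have hge : i ≤ idx m p (cum p i) := le_idx m p hi le_rfl
  have hle : cum p (idx m p (cum p i)) ≤ cum p i := cum_idx_le m p (cum_nonneg p i)
  have heq : cum p (idx m p (cum p i)) = cum p i :=
    le_antisymm hle (cum_mono p hge)
  have hpe : p (idx m p (cum p i)) = p i := by
    have h1 := chain p hge
    rw [heq, sub_self] at h1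
    exact sub_eq_zero.1 (norm_eq_zero.1 (le_antisymm h1 (norm_nonneg _)))
  rw [pointAt, heq, sub_self, zero_div, zero_smul, add_zero, hpe]

lemma pointAt_zero (m : ℕ) (p : ℕ → E2) : pointAt m p 0 = p 0 := by
  have := pointAt_cum m p (Nat.zero_le m)
  rwa [cum_zero] at this

/-- Every point of the trace is attained by `pointAt` at a parameter in `[0, L]`. -/
lemma trace_sub (m : ℕ) (p : ℕ → E2) {y : E2} (hy : y ∈ tourTrace m p) :
    ∃ t, 0 ≤ t ∧ t ≤ cum p m ∧ pointAt m p t = y := by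
  rcases hy with hy | hy
  · exact ⟨0, le_rfl, cum_nonneg p m, by rw [pointAt_zero]; exact (Set.mem_singleton_iff.1 hy).symm⟩
  · simp only [Set.mem_iUnion, Finset.mem_range] at hy
    obtain ⟨i, him, hseg⟩ := hy
    obtain ⟨u, v, hu, hv, huv, hy⟩ := hseg
    set ℓ := ‖p (i + 1) - p i‖ with hℓ
    set t := cum p i + v * ℓ with htd
    have ht0 : 0 ≤ t := by
      have := cum_nonneg p i
      have : 0 ≤ v * ℓ := mul_nonneg hv (norm_nonneg _)
      rw [htd]; linarith [cum_nonneg p i]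
    have htub : t ≤ cum p (i + 1) := by
      rw [htd, cum_succ]
      have : v * ℓ ≤ ℓ := by
        nlinarith [norm_nonneg (p (i + 1) - p i)]
      linarith
    have htL : t ≤ cum p m := htub.trans (cum_mono p him)
    refine ⟨t, ht0, htL, ?_⟩
    rcases lt_or_ge t (cum p (i + 1)) with hstrict | heq
    · -- idx t = i
      have hidx_ge : i ≤ idx m p t := le_idx m p (le_of_lt him)
        (by rw [htd]; nlinarith [norm_nonneg (p (i + 1) - p i)])
      have hidx_le : idx m p t ≤ i := by
        by_contra hc
        push_neg at hc
        have : cum p (i + 1) ≤ cum p (idx m p t) := cum_mono p hc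
        have := cum_idx_le m p ht0
        linarith
      have hidx : idx m p t = i := le_antisymm hidx_le hidx_ge
      have hℓpos : 0 < ℓ := by
        rcases lt_or_eq_of_le (norm_nonneg (p (i + 1) - p i)) with h | h
        · exact h
        · exfalso
          rw [htd, cum_succ, ← hℓ] at hstrict
          rw [← hℓ] at h
          rw [← h, mul_zero] at hstrict
          simp at hstrict
      rw [pointAt, hidx, ← hℓ]
      rw [show t - cum p i = v * ℓ by rw [htd]; ring]
      rw [mul_div_assoc, div_self hℓpos.ne', mul_one]
      rw [← hy]
      have : u = 1 - v := by linarith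
      rw [this]
      rw [smul_sub]
      rw [sub_smul, one_smul]
      abel
    · -- t = cum p (i+1), y = p (i+1)
      have hte : t = cum p (i + 1) := le_antisymm htub heq
      have hye : y = p (i + 1) := by
        have hle : v * ℓ ≥ ℓ := by
          rw [htd, cum_succ, ← hℓ] at hte
          linarith
        rcases eq_or_ne ℓ 0 with h0 | h0
        · have : p (i + 1) = p i := by
            rw [← sub_eq_zero]
            exact norm_eq_zero.1 (by rw [← hℓ]; exact h0)
          rw [← hy, this]
          rw [← add_smul, huv, one_smul]
        · have hv1 : v = 1 := by
            have hℓpos : 0 < ℓ := lt_of_le_of_ne (norm_nonneg _) (Ne.symm h0)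
            have : v ≥ 1 := by nlinarith
            have : v ≤ 1 := by linarith
            linarith
          have hu0 : u = 0 := by linarith
          rw [← hy, hv1, hu0, zero_smul, one_smul, zero_add]
      rw [hte, hye]
      exact pointAt_cum m p (Nat.succ_le_of_lt him)

end GridAux
set_option maxHeartbeats 2000000 in
theorem grid_discretization_disk :
    ∃ K : ℝ, 0 < K ∧
      ∀ (m : ℕ) (p : ℕ → EuclideanSpace ℝ (Fin 2)), p m = p 0 →
        1 ≤ tourLength m p →
        ∃ (m' : ℕ) (q : ℕ → EuclideanSpace ℝ (Fin 2)),
          q m' = q 0 ∧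
          q 0 = p 0 ∧
          (∀ k ≤ m', ∃ i j : ℤ,
            q k = p 0 + ((i : ℝ) • hexBasis₁ + (j : ℝ) • hexBasis₂)) ∧
          diskCoverage m p ⊆ diskCoverage m' q ∧
          tourLength m' q ≤ K * tourLength m p := by
  classical
  refine ⟨1920, by norm_num, ?_⟩
  intro m p hclosed hL
  have hcum : GridAux.cum p m = tourLength m p := rfl
  set L := tourLength m p with hLdef
  have hL0 : (0:ℝ) < L := lt_of_lt_of_le one_pos hL
  set n := ⌈L⌉₊ with hn
  -- anchors along the tour at unit arclength spacing
  set a : ℕ → EuclideanSpace ℝ (Fin 2) :=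
    fun k => GridAux.pointAt m p (min (k : ℝ) L) with ha
  have ha0 : a 0 = p 0 := by
    have hm0 : min ((0:ℕ) : ℝ) L = 0 := by
      simp [min_eq_left hL0.le]
    simp only [ha, hm0]
    exact GridAux.pointAt_zero m p
  have hminmem : ∀ k : ℕ, 0 ≤ min (k : ℝ) L ∧ min (k : ℝ) L ≤ GridAux.cum p m := by
    intro k
    refine ⟨le_min (Nat.cast_nonneg k) hL0.le, ?_⟩
    rw [hcum]
    exact min_le_right _ _
  have hstep : ∀ k : ℕ, ‖a (k + 1) - a k‖ ≤ 1 := by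
    intro k
    have h2 : min (k : ℝ) L ≤ min ((k + 1 : ℕ) : ℝ) L := by
      push_cast
      exact min_le_min (by linarith) le_rfl
    have h4 := GridAux.pointAt_lipschitz m p (hminmem k).1 h2 (hminmem (k + 1)).2
    have h5 : min ((k + 1 : ℕ) : ℝ) L - min (k : ℝ) L ≤ 1 := by
      push_cast
      rcases le_total ((k : ℝ) + 1) L with h | h
      · rw [min_eq_left h, min_eq_left (by linarith : (k : ℝ) ≤ L)]; linarith
      · rcases le_total (k : ℝ) L with h' | h'
        · rw [min_eq_right h, min_eq_left h']; linarith
        · rw [min_eq_right h, min_eq_right h']; linarith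
    simp only [ha]
    exact h4.trans h5
  -- lattice approximations of the anchors
  have hex : ∀ k : ℕ, ∃ ij : ℤ × ℤ, ‖a k - (p 0 + GridAux.lOff ij)‖ ≤ 1 :=
    fun k => GridAux.exists_lattice_near (p 0) (a k)
  set I : ℕ → ℤ × ℤ := fun k => if k = 0 ∨ n < k then (0, 0)
    else Classical.choose (hex k) with hI
  set c : ℕ → EuclideanSpace ℝ (Fin 2) :=
    fun k => p 0 + GridAux.lOff (I k) with hc
  have hc0 : ∀ k : ℕ, k = 0 ∨ n < k → c k = p 0 := by
    intro k hk
    have hIk : I k = (0, 0) := by simp only [hI]; rw [if_pos hk]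
    simp only [hc, hIk, GridAux.lOff_zero, add_zero]
  have hca : ∀ k : ℕ, k ≤ n → ‖a k - c k‖ ≤ 1 := by
    intro k hk
    rcases eq_or_ne k 0 with h0 | h0
    · rw [h0, hc0 0 (Or.inl rfl), ha0]
      simp
    · have hni : ¬(k = 0 ∨ n < k) := by
        push_neg
        exact ⟨h0, hk⟩
      have hIk : I k = Classical.choose (hex k) := by
        simp only [hI]; rw [if_neg hni]
      simp only [hc, hIk]
      exact Classical.choose_spec (hex k)
  have hctrans : ∀ k : ℕ, k + 1 ≤ n → ‖c (k + 1) - c k‖ ≤ 3 := by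
    intro k hk
    have key : ‖c (k + 1) - c k‖ ≤
        ‖a (k + 1) - c (k + 1)‖ + ‖a (k + 1) - a k‖ + ‖a k - c k‖ := by
      have t1 := norm_sub_le_norm_sub_add_norm_sub (c (k+1)) (a (k+1)) (c k)
      have t2 := norm_sub_le_norm_sub_add_norm_sub (a (k+1)) (a k) (c k)
      have e1 : ‖c (k+1) - a (k+1)‖ = ‖a (k+1) - c (k+1)‖ := norm_sub_rev _ _
      linarith
    linarith [hca (k+1) hk, hca k (Nat.le_of_succ_le hk), hstep k, key]
  -- the lattice tour
  set q : ℕ → EuclideanSpace ℝ (Fin 2) := fun t => if t % 71 % 2 = 1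
    then c (t / 71) + GridAux.lOff (GridAux.hexEnum ((t % 71 - 1) / 2))
    else c (t / 71) with hq
  clear_value q c I a n L
  have hqeval_even : ∀ t : ℕ, t % 71 % 2 ≠ 1 → q t = c (t / 71) := by
    intro t h
    simp only [hq]
    rw [if_neg h]
  have hqeval_odd : ∀ t : ℕ, t % 71 % 2 = 1 →
      q t = c (t / 71) + GridAux.lOff (GridAux.hexEnum ((t % 71 - 1) / 2)) := by
    intro t h
    simp only [hq]
    rw [if_pos h]
  have hq0 : q 0 = p 0 := by
    rw [hqeval_even 0 (by norm_num), show (0:ℕ) / 71 = 0 from rfl,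
      hc0 0 (Or.inl rfl)]
  have hqm' : q ((n + 1) * 71) = p 0 := by
    have h1 : ((n + 1) * 71) % 71 % 2 ≠ 1 := by omega
    have h2 : ((n + 1) * 71) / 71 = n + 1 := by omega
    rw [hqeval_even _ h1, h2, hc0 (n + 1) (Or.inr (by omega))]
  have hlat : ∀ t : ℕ, ∃ ij : ℤ × ℤ, q t = p 0 + GridAux.lOff ij := by
    intro t
    by_cases h : t % 71 % 2 = 1
    · refine ⟨I (t / 71) + GridAux.hexEnum ((t % 71 - 1) / 2), ?_⟩
      rw [hqeval_odd t h, GridAux.lOff_add]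
      simp only [hc]
      rw [add_assoc]
    · refine ⟨I (t / 71), ?_⟩
      rw [hqeval_even t h]
      simp only [hc]
  -- edge bounds
  have hedge : ∀ t : ℕ, t + 1 < (n + 1) * 71 → ‖q (t + 1) - q t‖ ≤ 9 := by
    intro t ht
    by_cases hodd : t % 71 % 2 = 1
    · have h1 : (t + 1) % 71 % 2 ≠ 1 := by omega
      have h2 : (t + 1) / 71 = t / 71 := by omega
      rw [hqeval_even _ h1, hqeval_odd t hodd, h2]
      have e : c (t / 71) -
          (c (t / 71) + GridAux.lOff (GridAux.hexEnum ((t % 71 - 1) / 2)))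
          = -(GridAux.lOff (GridAux.hexEnum ((t % 71 - 1) / 2))) := by abel
      rw [e, norm_neg]
      exact GridAux.hexEnum_norm_le _ (by omega)
    · by_cases h70 : t % 71 = 70
      · have h1 : (t + 1) % 71 % 2 ≠ 1 := by omega
        have h2 : (t + 1) / 71 = t / 71 + 1 := by omega
        have hkn : t / 71 + 1 ≤ n := by omega
        rw [hqeval_even _ h1, hqeval_even t hodd, h2]
        exact (hctrans _ hkn).trans (by norm_num)
      · have h1 : (t + 1) % 71 % 2 = 1 := by omega
        have h2 : (t + 1) / 71 = t / 71 := by omega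
        have h3 : ((t + 1) % 71 - 1) / 2 ≤ 34 := by omega
        rw [hqeval_odd _ h1, hqeval_even t hodd, h2, add_sub_cancel_left]
        exact GridAux.hexEnum_norm_le _ h3
  -- total length bound
  have hnle : (n : ℝ) ≤ L + 1 := by
    rw [hn]
    exact (Nat.ceil_lt_add_one hL0.le).le
  have hlen : tourLength ((n + 1) * 71) q ≤ 1920 * L := by
    have hsplit : tourLength ((n + 1) * 71) q =
        (∑ t ∈ Finset.range (71 * n + 70), ‖q (t + 1) - q t‖) +
          ‖q (71 * n + 70 + 1) - q (71 * n + 70)‖ := by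
      rw [show (n + 1) * 71 = (71 * n + 70) + 1 by ring]
      rw [tourLength, Finset.sum_range_succ]
    have hbulk : (∑ t ∈ Finset.range (71 * n + 70), ‖q (t + 1) - q t‖) ≤
        9 * ((71 * n + 70 : ℕ) : ℝ) := by
      calc ∑ t ∈ Finset.range (71 * n + 70), ‖q (t + 1) - q t‖
          ≤ ∑ _t ∈ Finset.range (71 * n + 70), (9:ℝ) := by
            refine Finset.sum_le_sum fun i hi => ?_
            refine hedge i ?_
            have := Finset.mem_range.1 hi
            omega
        _ = 9 * ((71 * n + 70 : ℕ) : ℝ) := by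
            rw [Finset.sum_const, Finset.card_range, nsmul_eq_mul]
            ring
    have hlast : ‖q (71 * n + 70 + 1) - q (71 * n + 70)‖ ≤ L + 1 := by
      have h1 : (71 * n + 70 + 1) % 71 % 2 ≠ 1 := by omega
      have h2 : (71 * n + 70 + 1) / 71 = n + 1 := by omega
      have h3 : (71 * n + 70) % 71 % 2 ≠ 1 := by omega
      have h4 : (71 * n + 70) / 71 = n := by omega
      rw [hqeval_even _ h1, hqeval_even _ h3, h2, h4,
        hc0 (n + 1) (Or.inr (by omega))]
      have hb1 : ‖a n - a 0‖ ≤ L := by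
        have h6 : min ((0:ℕ) : ℝ) L ≤ min ((n:ℕ) : ℝ) L :=
          min_le_min (by push_cast; positivity) le_rfl
        have h5 := GridAux.pointAt_lipschitz m p (hminmem 0).1 h6 (hminmem n).2
        simp only [ha]
        refine h5.trans ?_
        have h7 : min ((n:ℕ) : ℝ) L ≤ L := min_le_right _ _
        have h8 := (hminmem 0).1
        linarith
      have hb2 := hca n le_rfl
      calc ‖p 0 - c n‖ ≤ ‖p 0 - a n‖ + ‖a n - c n‖ :=
            norm_sub_le_norm_sub_add_norm_sub _ _ _
        _ ≤ L + 1 := by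
            rw [← ha0, norm_sub_rev]
            linarith
    rw [hsplit]
    have hc1 : ((71 * n + 70 : ℕ) : ℝ) = 71 * (n:ℝ) + 70 := by push_cast; ring
    rw [hc1] at hbulk
    nlinarith [hbulk, hlast, hnle, hL]
  -- coverage
  have hcov : diskCoverage m p ⊆ diskCoverage ((n + 1) * 71) q := by
    intro x hx
    simp only [diskCoverage, Set.mem_add] at hx ⊢
    obtain ⟨y, hy, u, hu, hxy⟩ := hx
    obtain ⟨t, ht0, htL, hpt⟩ := GridAux.trace_sub m p hy
    rw [hcum] at htL
    set k := ⌈t⌉₊ with hk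
    clear_value k
    have hkn : k ≤ n := by
      rw [hk, hn]
      exact Nat.ceil_mono htL
    have hyak : ‖y - a k‖ ≤ 1 := by
      have h1 : t ≤ min (k : ℝ) L := le_min (by rw [hk]; exact Nat.le_ceil t) htL
      have h4 := GridAux.pointAt_lipschitz m p ht0 h1 (hminmem k).2
      rw [hpt] at h4
      have hlt : ((k:ℕ) : ℝ) < t + 1 := by
        rw [hk]
        exact Nat.ceil_lt_add_one ht0
      have h5 : min (k : ℝ) L - t ≤ 1 := by
        have hx1 : min (k:ℝ) L ≤ (k:ℝ) := min_le_left _ _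
        linarith
      rw [norm_sub_rev]
      simp only [ha]
      exact h4.trans h5
    obtain ⟨ij, hij⟩ := GridAux.exists_lattice_near (p 0) x
    have hxy' : ‖x - y‖ ≤ 1 := by
      rw [← hxy, add_sub_cancel_left]
      simpa using hu
    have hnear : ‖GridAux.lOff ij - GridAux.lOff (I k)‖ ≤ 4 := by
      have e : GridAux.lOff ij - GridAux.lOff (I k) =
          (p 0 + GridAux.lOff ij) - c k := by
        simp only [hc]
        abel
      rw [e]
      have t1 := norm_sub_le_norm_sub_add_norm_sub (p 0 + GridAux.lOff ij) x (c k)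
      have t2 := norm_sub_le_norm_sub_add_norm_sub x y (c k)
      have t3 := norm_sub_le_norm_sub_add_norm_sub y (a k) (c k)
      have t4 : ‖p 0 + GridAux.lOff ij - x‖ = ‖x - (p 0 + GridAux.lOff ij)‖ :=
        norm_sub_rev _ _
      linarith [hij, hxy', hyak, hca k hkn]
    set Δ : ℤ × ℤ := ij - I k with hΔ
    clear_value Δ
    have hIΔ : I k + Δ = ij := by rw [hΔ]; abel
    have hoffΔ : GridAux.lOff Δ = GridAux.lOff ij - GridAux.lOff (I k) := by
      have h7 := GridAux.lOff_add (I k) Δ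
      rw [hIΔ] at h7
      rw [h7]
      abel
    have hnormΔ : ‖GridAux.lOff Δ‖ ≤ 4 := by rw [hoffΔ]; exact hnear
    have hj2 : |Δ.2| ≤ 2 := by
      have h8 := GridAux.abs_coord_le_norm (GridAux.lOff Δ) 1
      rw [GridAux.lOff_apply1] at h8
      have h9 : |(Δ.2 : ℝ)| * (3/2) ≤ 4 := by
        rw [abs_mul, abs_of_nonneg (by norm_num : (0:ℝ) ≤ (3:ℝ)/2)] at h8
        linarith
      by_contra hcon
      push_neg at hcon
      have h10 : (3:ℝ) ≤ |(Δ.2:ℝ)| := by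
        rw [← Int.cast_abs]
        exact_mod_cast (by omega : (3:ℤ) ≤ |Δ.2|)
      linarith
    have hs17 : (17/10 : ℝ) < Real.sqrt 3 := GridAux.sqrt3_gt
    have hi3 : |Δ.1| ≤ 3 := by
      have h8 := GridAux.abs_coord_le_norm (GridAux.lOff Δ) 0
      rw [GridAux.lOff_apply0] at h8
      have h9 : |(Δ.1:ℝ) * Real.sqrt 3| ≤
          |(Δ.1:ℝ) * Real.sqrt 3 + (Δ.2:ℝ) * (Real.sqrt 3 / 2)| +
            |(Δ.2:ℝ) * (Real.sqrt 3 / 2)| := by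
        have h9' := abs_add_le ((Δ.1:ℝ) * Real.sqrt 3 + (Δ.2:ℝ) * (Real.sqrt 3 / 2))
          (-((Δ.2:ℝ) * (Real.sqrt 3 / 2)))
        simpa using h9'
      have h10 : |(Δ.2:ℝ)| ≤ 2 := by
        rw [← Int.cast_abs]
        exact_mod_cast hj2
      have h11 : |(Δ.1:ℝ)| * Real.sqrt 3 ≤ 4 + Real.sqrt 3 := by
        rw [abs_mul, abs_mul,
          abs_of_nonneg (Real.sqrt_nonneg 3),
          abs_of_nonneg (by positivity : (0:ℝ) ≤ Real.sqrt 3 / 2)] at h9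
        nlinarith [Real.sqrt_nonneg 3]
      by_contra hcon
      push_neg at hcon
      have h12 : (4:ℝ) ≤ |(Δ.1:ℝ)| := by
        rw [← Int.cast_abs]
        exact_mod_cast (by omega : (4:ℤ) ≤ |Δ.1|)
      have h13 := mul_le_mul_of_nonneg_right h12 (Real.sqrt_nonneg 3)
      linarith
    have hje := abs_le.1 hj2
    have hie := abs_le.1 hi3
    set s : ℕ := (Δ.1 + 3).toNat + 7 * (Δ.2 + 2).toNat with hs
    clear_value s
    have hs34 : s ≤ 34 := by rw [hs]; omega
    have hes : GridAux.hexEnum s = Δ := by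
      have h1 : s % 7 = (Δ.1 + 3).toNat := by rw [hs]; omega
      have h2 : s / 7 = (Δ.2 + 2).toNat := by rw [hs]; omega
      simp only [GridAux.hexEnum, h1, h2]
      have e1 : (((Δ.1 + 3).toNat : ℕ) : ℤ) - 3 = Δ.1 := by omega
      have e2 : (((Δ.2 + 2).toNat : ℕ) : ℤ) - 2 = Δ.2 := by omega
      rw [e1, e2]
    have hT : 71 * k + (2 * s + 1) < (n + 1) * 71 := by omega
    have hqT : q (71 * k + (2 * s + 1)) = c k + GridAux.lOff (GridAux.hexEnum s) := by
      have h1 : (71 * k + (2 * s + 1)) % 71 = 2 * s + 1 := by omega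
      have h3 : (71 * k + (2 * s + 1)) % 71 % 2 = 1 := by omega
      have h2 : (71 * k + (2 * s + 1)) / 71 = k := by omega
      rw [hqeval_odd _ h3, h1, h2]
      have h4 : (2 * s + 1 - 1) / 2 = s := by omega
      rw [h4]
    have hz : q (71 * k + (2 * s + 1)) = p 0 + GridAux.lOff ij := by
      rw [hqT, hes]
      simp only [hc]
      rw [add_assoc, ← GridAux.lOff_add, hIΔ]
    refine ⟨q (71 * k + (2 * s + 1)), ?_, x - q (71 * k + (2 * s + 1)), ?_, by abel⟩
    · simp only [tourTrace]
      refine Set.mem_union_right _ ?_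
      rw [Set.mem_iUnion₂]
      exact ⟨71 * k + (2 * s + 1), Finset.mem_range.2 hT,
        left_mem_segment ℝ _ _⟩
    · rw [Metric.mem_closedBall, dist_zero_right, hz]
      exact hij
  refine ⟨(n + 1) * 71, q, by rw [hqm', hq0], hq0, ?_, hcov, hlen⟩
  intro k _
  obtain ⟨ij, hij⟩ := hlat k
  exact ⟨ij.1, ij.2, by rw [hij]; rfl⟩
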